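/- Let n ≥ 1 and k ≥ 0, and let P^n be a coherent exchangeable lower prevision on ℒ(𝒳^n) with count distribution Q^n(h) := P^n(h∘T^n). For a gamble g on 𝒩^n define ḡ ∈ ℒ(𝒩^{n+k}) by ḡ(μ) := Σ_{m∈𝒩^n} (ν(m)·ν(μ−m)/ν(μ))·g(m), where ν(μ−m) := 0 unless m ≤ μ componentwise, and assume that max_{μ∈𝒩^{n+k}} ḡ(μ) ≥ Q^n(g) for every gamble g on 𝒩^n. Then the point-wise smallest coherent exchangeable lower prevision on ℒ(𝒳^{n+k}) dominating the assessments f̃ ↦ P^n(f) is the one whose count distribution is E(h) := sup{ Q^n(g) : g ∈ ℒ(𝒩^n), ḡ(μ) ≤ h(μ) for all μ ∈ 𝒩^{n+k} }, i.e., it is the lower prevision f ↦ E(MuHy^{n+k}(f|·)) on ℒ(𝒳^{n+k}). -/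

import Mathlib

open Finset Filter Topology

/-- A coherent lower prevision on the gambles over a finite nonempty space `Ω`. -/
def LowerPrevCoherent {Ω : Type*} [Fintype Ω] [Nonempty Ω] (P : (Ω → ℝ) → ℝ) : Prop :=
  (∀ f : Ω → ℝ, sInf (Set.range f) ≤ P f) ∧
  (∀ (f : Ω → ℝ) (l : ℝ), 0 ≤ l → P (fun ω => l * f ω) = l * P f) ∧
  (∀ f g : Ω → ℝ, P f + P g ≤ P (f + g))

/-- A linear prevision on the gambles over a finite nonempty space `Ω`. -/
def LinearPrevision {Ω : Type*} [Fintype Ω] [Nonempty Ω] (P : (Ω → ℝ) → ℝ) : Prop :=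
  (∀ f g : Ω → ℝ, P (f + g) = P f + P g) ∧
  (∀ (l : ℝ) (f : Ω → ℝ), P (fun ω => l * f ω) = l * P f) ∧
  (∀ f : Ω → ℝ, (∀ ω, 0 ≤ f ω) → 0 ≤ P f) ∧
  P (fun _ => 1) = 1

/-- Exchangeability of a lower prevision on gambles on `X^N`:
`P (πf − f) ≥ 0` for every gamble `f` and every permutation `π`. -/
def Exchangeable {X : Type*} {N : ℕ} (P : ((Fin N → X) → ℝ) → ℝ) : Prop :=
  ∀ (f : (Fin N → X) → ℝ) (π : Equiv.Perm (Fin N)),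
    0 ≤ P (fun x => f (fun k => x (π k)) - f x)

/-- The set of count vectors `𝒩^n`. -/
abbrev CVec (X : Type*) [Fintype X] (n : ℕ) : Type _ := {m : X → ℕ // ∑ x, m x = n}

noncomputable instance {X : Type*} [Fintype X] [DecidableEq X] (n : ℕ) : Fintype (CVec X n) := by
  have key : ∀ (m : CVec X n) (x : X), m.1 x < n + 1 := by
    intro m x
    have h1 : m.1 x ≤ ∑ y, m.1 y :=
      Finset.single_le_sum (fun i _ => Nat.zero_le _) (Finset.mem_univ x)
    have h2 := m.2
    omega
  exact Fintype.ofInjective (fun m : CVec X n => fun x => (⟨m.1 x, key m x⟩ : Fin (n+1)))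
    (fun a b hab => Subtype.ext (funext fun x => congrArg Fin.val (congrFun hab x)))

instance {X : Type*} [Fintype X] [DecidableEq X] [Nonempty X] (n : ℕ) :
    Nonempty (CVec X n) :=
  ⟨⟨fun x => if x = Classical.arbitrary X then n else 0, by simp⟩⟩

/-- The counting map `T^n : X^n → 𝒩^n`. -/
def countMap {X : Type*} [Fintype X] [DecidableEq X] (n : ℕ) (z : Fin n → X) : CVec X n :=
  ⟨fun x => (Finset.univ.filter fun k => z k = x).card, by
    have h := Finset.card_eq_sum_card_fiberwise (f := z) (s := Finset.univ) (t := Finset.univ)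
      (fun k _ => Finset.mem_univ (z k))
    simpa using h.symm⟩

/-- `ν(m) = n!/∏ₓ mₓ!` for a count vector `m ∈ 𝒩^n`. -/
def nu {X : Type*} [Fintype X] {n : ℕ} (m : CVec X n) : ℕ :=
  Nat.multinomial Finset.univ m.1

/-- `ν(μ − m)`, which is `0` unless `m ≤ μ` componentwise. -/
def nuSub {X : Type*} [Fintype X] {n k : ℕ} (μ : CVec X (n + k)) (m : CVec X n) : ℕ :=
  if ∀ x, m.1 x ≤ μ.1 x then Nat.multinomial Finset.univ (fun x => μ.1 x - m.1 x) else 0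

/-- The multiple hyper-geometric prevision `MuHy^n(f|m) = (1/ν(m)) ∑_{z∈[m]} f(z)`. -/
noncomputable def MuHy {X : Type*} [Fintype X] [DecidableEq X] {n : ℕ}
    (f : (Fin n → X) → ℝ) (m : CVec X n) : ℝ :=
  (∑ z ∈ Finset.univ.filter fun z : Fin n → X => countMap n z = m, f z) / (nu m : ℝ)

/-- The `X`-simplex `Σ_X`, as a subtype of `X → ℝ`. -/
abbrev SimplexPt (X : Type*) [Fintype X] : Type _ :=
  {θ : X → ℝ // (∀ x, 0 ≤ θ x) ∧ ∑ x, θ x = 1}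

/-- The Bernstein basis polynomial `B_m(θ) = ν(m) ∏ₓ θₓ^{mₓ}`. -/
noncomputable def Bern {X : Type*} [Fintype X] {n : ℕ} (m : CVec X n) (θ : X → ℝ) : ℝ :=
  (nu m : ℝ) * ∏ x, θ x ^ m.1 x

/-- The count multinomial expectation `CoMn^n(g|θ) = ∑_m g(m) B_m(θ)`. -/
noncomputable def CoMn {X : Type*} [Fintype X] [DecidableEq X] {n : ℕ} (g : CVec X n → ℝ) (θ : X → ℝ) : ℝ :=
  ∑ m : CVec X n, g m * Bern m θ

/-- The multinomial expectation `Mn^n(f|θ) = ∑_z f(z) ∏ₓ θₓ^{Tₓ(z)}`. -/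
noncomputable def Mn {X : Type*} [Fintype X] [DecidableEq X] {n : ℕ}
    (f : (Fin n → X) → ℝ) (θ : X → ℝ) : ℝ :=
  ∑ z : Fin n → X, f z * ∏ x, θ x ^ (countMap n z).1 x

/-- `CoMn^n(g|·)` as a function on the simplex. -/
noncomputable def CoMnP {X : Type*} [Fintype X] [DecidableEq X] {n : ℕ} (g : CVec X n → ℝ)
    (θ : SimplexPt X) : ℝ :=
  CoMn g θ.1

/-- `Mn^n(f|·)` as a function on the simplex. -/
noncomputable def MnP {X : Type*} [Fintype X] [DecidableEq X] {n : ℕ}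
    (f : (Fin n → X) → ℝ) (θ : SimplexPt X) : ℝ :=
  Mn f θ.1

/-- Polynomial gambles on the simplex: the set `𝒱(Σ_X)`. -/
def IsPolyGamble {X : Type*} [Fintype X] [DecidableEq X] (p : SimplexPt X → ℝ) : Prop :=
  ∃ n : ℕ, 1 ≤ n ∧ ∃ g : CVec X n → ℝ, p = fun θ => CoMnP g θ

/-- Coherence of a functional on the linear space `𝒱(Σ_X)` of polynomial gambles. -/
def CoherentOnPoly {X : Type*} [Fintype X] [DecidableEq X] (S : (SimplexPt X → ℝ) → ℝ) : Prop :=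
  (∀ p, IsPolyGamble p → sInf (Set.range p) ≤ S p) ∧
  (∀ p, IsPolyGamble p → ∀ l : ℝ, 0 ≤ l → S (fun θ => l * p θ) = l * S p) ∧
  (∀ p q, IsPolyGamble p → IsPolyGamble q → S p + S q ≤ S (p + q))

/-- Cylindrical extension of a gamble on `X^n` to `X^{n+k}`. -/
def cylExt {X : Type*} {n k : ℕ} (f : (Fin n → X) → ℝ) : (Fin (n + k) → X) → ℝ :=
  fun z => f fun i => z (Fin.castLE (Nat.le_add_right n k) i)

/-- Time consistency of a family of lower previsions on the `X^n`. -/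
def PTimeConsistent {X : Type*} (P : ∀ n : ℕ, ((Fin n → X) → ℝ) → ℝ) : Prop :=
  ∀ n : ℕ, 1 ≤ n → ∀ (k : ℕ) (f : (Fin n → X) → ℝ), P n f = P (n + k) (cylExt f)

/-- Time consistency of a family of count lower previsions on the `𝒩^n`. -/
def QTimeConsistent {X : Type*} [Fintype X] [DecidableEq X] (Q : ∀ n : ℕ, (CVec X n → ℝ) → ℝ) : Prop :=
  ∀ n : ℕ, 1 ≤ n → ∀ (k : ℕ) (h : CVec X n → ℝ),
    Q n h = Q (n + k) (fun μ => ∑ m : CVec X n, ((nuSub μ m : ℝ) * (nu m : ℝ) / (nu μ : ℝ)) * h m)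

/-- The relative frequency vector `m/n ∈ Σ_X` of a count vector `m ∈ 𝒩^n`, `n ≥ 1`. -/
noncomputable def freqPt {X : Type*} [Fintype X] {n : ℕ} (hn : 0 < n) (m : CVec X n) :
    SimplexPt X :=
  ⟨fun x => (m.1 x : ℝ) / n,
   fun x => div_nonneg (Nat.cast_nonneg _) (Nat.cast_nonneg _),
   by
    rw [← Finset.sum_div]
    have h : (∑ x, (m.1 x : ℝ)) = (n : ℝ) := by exact_mod_cast m.2
    rw [h]
    exact div_self (Nat.cast_ne_zero.mpr hn.ne')⟩

/-- `ḡ(μ) = ∑_m (ν(m) ν(μ−m) / ν(μ)) g(m)`. -/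
noncomputable def gbar {X : Type*} [Fintype X] [DecidableEq X] {n k : ℕ}
    (g : CVec X n → ℝ) (μ : CVec X (n + k)) : ℝ :=
  ∑ m : CVec X n, ((nu m : ℝ) * (nuSub μ m : ℝ) / (nu μ : ℝ)) * g m

section CohLemmas
variable {Ω : Type*} [Fintype Ω] [Nonempty Ω] {P : (Ω → ℝ) → ℝ}

lemma coh_zero (hP : LowerPrevCoherent P) : P 0 = 0 := by
  have h := hP.2.1 0 0 le_rfl
  simpa [Pi.zero_def] using h

lemma coh_nonneg (hP : LowerPrevCoherent P) {f : Ω → ℝ} (hf : ∀ ω, 0 ≤ f ω) : 0 ≤ P f := by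
  refine le_trans ?_ (hP.1 f)
  exact le_csInf (Set.range_nonempty f) (by rintro b ⟨ω, rfl⟩; exact hf ω)

lemma coh_mono (hP : LowerPrevCoherent P) {f g : Ω → ℝ} (hfg : ∀ ω, f ω ≤ g ω) : P f ≤ P g := by
  have h1 : 0 ≤ P (g - f) := coh_nonneg hP (fun ω => by simpa using sub_nonneg.mpr (hfg ω))
  have h2 := hP.2.2 f (g - f)
  have h3 : f + (g - f) = g := by funext ω; simp
  rw [h3] at h2
  linarith

lemma coh_const_le (hP : LowerPrevCoherent P) (c : ℝ) : c ≤ P (fun _ => c) := by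
  refine le_trans ?_ (hP.1 _)
  simp [Set.range_const]

lemma coh_sum (hP : LowerPrevCoherent P) {ι : Type*} (s : Finset ι) (g : ι → Ω → ℝ) :
    ∑ i ∈ s, P (g i) ≤ P (fun ω => ∑ i ∈ s, g i ω) := by
  classical
  induction s using Finset.cons_induction with
  | empty => simp [show (fun _ : Ω => (0:ℝ)) = 0 from rfl, coh_zero hP]
  | cons a s ha ih =>
      have h2 := hP.2.2 (g a) (fun ω => ∑ i ∈ s, g i ω)
      have h3 : (g a + fun ω => ∑ i ∈ s, g i ω) = fun ω => ∑ i ∈ cons a s ha, g i ω := by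
        funext ω; rw [Finset.sum_cons]; rfl
      rw [h3] at h2
      rw [Finset.sum_cons]
      exact le_trans (add_le_add_right ih _) h2

end CohLemmas
section Comb
variable {X : Type*} [Fintype X] [DecidableEq X] {n : ℕ}

lemma countMap_comp_perm (z : Fin n → X) (π : Equiv.Perm (Fin n)) :
    countMap n (fun k => z (π k)) = countMap n z := by
  apply Subtype.ext; funext x
  show (Finset.univ.filter fun k => z (π k) = x).card = (Finset.univ.filter fun k => z k = x).card
  exact Finset.card_equiv π (by simp)

lemma card_subtype_fiber (z : Fin n → X) (x : X) :
    Fintype.card {k // z k = x} = (countMap n z).1 x := by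
  simp [Fintype.card_subtype, countMap]

/-- auxiliary equiv for `exists_rep` -/
def fiberEquivFin (m : X → ℕ) (x : X) : {p : Σ x', Fin (m x') // p.1 = x} ≃ Fin (m x) where
  toFun p := Fin.cast (congrArg m p.2) p.1.2
  invFun i := ⟨⟨x, i⟩, rfl⟩
  left_inv := by rintro ⟨⟨x', i⟩, rfl⟩; rfl
  right_inv i := rfl

lemma exists_rep (m : CVec X n) : ∃ z : Fin n → X, countMap n z = m := by
  have hcard : Fintype.card (Fin n) = Fintype.card (Σ x, Fin (m.1 x)) := by
    simp [Fintype.card_sigma, m.2]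
  let e : Fin n ≃ Σ x, Fin (m.1 x) := Fintype.equivOfCardEq hcard
  refine ⟨fun k => (e k).1, Subtype.ext (funext fun x => ?_)⟩
  rw [← card_subtype_fiber]
  rw [Fintype.card_congr ((Equiv.subtypeEquiv e (fun k => Iff.rfl)).trans (fiberEquivFin m.1 x))]
  simp

lemma exists_perm_eq {y z : Fin n → X} (h : countMap n y = countMap n z) :
    ∃ π : Equiv.Perm (Fin n), ∀ k, z (π k) = y k := by
  have hcard : ∀ x, Fintype.card {k // y k = x} = Fintype.card {k // z k = x} := by
    intro x; rw [card_subtype_fiber, card_subtype_fiber, h]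
  let F : ∀ x, {k // y k = x} ≃ {k // z k = x} := fun x => Fintype.equivOfCardEq (hcard x)
  refine ⟨(Equiv.sigmaFiberEquiv y).symm.trans
    ((Equiv.sigmaCongrRight F).trans (Equiv.sigmaFiberEquiv z)), fun k => ?_⟩
  simp [Equiv.sigmaFiberEquiv, Equiv.sigmaCongrRight]
  exact (F (y k) ⟨k, rfl⟩).2

lemma card_perm_fiber {y z : Fin n → X} (h : countMap n y = countMap n z) :
    (univ.filter fun π : Equiv.Perm (Fin n) => (fun k => z (π k)) = y).card
      = ∏ x, Nat.factorial ((countMap n z).1 x) := by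
  obtain ⟨π₀, hπ₀⟩ := exists_perm_eq h
  have hstab : (univ.filter fun σ : Equiv.Perm (Fin n) => z ∘ σ = z).card
      = ∏ x, Nat.factorial ((countMap n z).1 x) := by
    rw [← Fintype.card_subtype]
    rw [DomMulAct.stabilizer_card z]
    exact Finset.prod_congr rfl fun x _ => by rw [card_subtype_fiber]
  rw [← hstab]
  apply Finset.card_bij' (fun π _ => π * π₀⁻¹) (fun σ _ => σ * π₀)
  · intro π hπ
    have hy : (fun k => z (π k)) = y := (Finset.mem_filter.mp hπ).2
    refine Finset.mem_filter.mpr ⟨Finset.mem_univ _, funext fun k => ?_⟩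
    have h1 : z (π (π₀⁻¹ k)) = y (π₀⁻¹ k) := congrFun hy _
    simp only [Function.comp, Equiv.Perm.mul_apply]
    rw [h1, ← hπ₀ (π₀⁻¹ k)]
    simp
  · intro σ hσ
    have hz : z ∘ σ = z := (Finset.mem_filter.mp hσ).2
    refine Finset.mem_filter.mpr ⟨Finset.mem_univ _, funext fun k => ?_⟩
    have := congrFun hz (π₀ k)
    simp only [Function.comp, Equiv.Perm.mul_apply] at this ⊢
    rw [this, hπ₀]
  · intro π _; group
  · intro σ _; group

lemma sum_perm {M : Type*} [AddCommMonoid M] (z : Fin n → X) (f : (Fin n → X) → M) :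
    ∑ π : Equiv.Perm (Fin n), f (fun k => z (π k))
      = (∏ x, Nat.factorial ((countMap n z).1 x)) •
        ∑ y ∈ univ.filter fun y => countMap n y = countMap n z, f y := by
  classical
  rw [Finset.smul_sum]
  rw [← Finset.sum_fiberwise_of_maps_to (g := fun π : Equiv.Perm (Fin n) => fun k => z (π k))
        (t := univ.filter fun y => countMap n y = countMap n z)
        (fun π _ => Finset.mem_filter.mpr ⟨Finset.mem_univ _, countMap_comp_perm z π⟩)
        (fun π => f (fun k => z (π k)))]
  refine Finset.sum_congr rfl fun y hy => ?_
  have hy' : countMap n y = countMap n z := (Finset.mem_filter.mp hy).2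
  calc ∑ π ∈ univ.filter (fun π : Equiv.Perm (Fin n) => (fun k => z (π k)) = y),
        f (fun k => z (π k))
      = ∑ π ∈ univ.filter (fun π : Equiv.Perm (Fin n) => (fun k => z (π k)) = y), f y :=
        Finset.sum_congr rfl (fun π hπ => by rw [(Finset.mem_filter.mp hπ).2])
    _ = _ := by rw [Finset.sum_const, card_perm_fiber hy']

lemma card_atom (m : CVec X n) :
    (univ.filter fun z : Fin n → X => countMap n z = m).card = nu m := by
  obtain ⟨z, rfl⟩ := exists_rep m
  have h := sum_perm (M := ℕ) z (fun _ => 1)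
  simp only [Finset.sum_const, Finset.card_univ, Fintype.card_perm, Fintype.card_fin,
    smul_eq_mul, mul_one] at h
  have hspec := Nat.multinomial_spec Finset.univ (countMap n z).1
  rw [(countMap n z).2] at hspec
  have hpos : 0 < ∏ x, Nat.factorial ((countMap n z).1 x) := Finset.prod_pos fun x _ => Nat.factorial_pos _
  refine Nat.eq_of_mul_eq_mul_left hpos ?_
  rw [← h, ← hspec]
  rfl

lemma nu_pos (m : CVec X n) : 0 < nu m := Nat.multinomial_pos _ _

end Comb
section MuHyL
variable {X : Type*} [Fintype X] [DecidableEq X] {n : ℕ}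

lemma muHy_smul (l : ℝ) (f : (Fin n → X) → ℝ) (m : CVec X n) :
    MuHy (fun z => l * f z) m = l * MuHy f m := by
  unfold MuHy; rw [← Finset.mul_sum, mul_div_assoc]

lemma muHy_add (f g : (Fin n → X) → ℝ) (m : CVec X n) :
    MuHy (f + g) m = MuHy f m + MuHy g m := by
  unfold MuHy
  beta_reduce
  simp only [Pi.add_apply]
  rw [Finset.sum_add_distrib, add_div]

lemma muHy_sub (f g : (Fin n → X) → ℝ) (m : CVec X n) :
    MuHy (fun z => f z - g z) m = MuHy f m - MuHy g m := by
  unfold MuHy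
  beta_reduce
  rw [Finset.sum_sub_distrib, sub_div]

lemma muHy_perm (f : (Fin n → X) → ℝ) (π : Equiv.Perm (Fin n)) (m : CVec X n) :
    MuHy (fun z => f (fun k => z (π k))) m = MuHy f m := by
  unfold MuHy
  congr 1
  apply Finset.sum_nbij' (i := fun z => fun k => z (π k)) (j := fun z => fun k => z (π.symm k))
  · intro z hz
    refine Finset.mem_filter.mpr ⟨Finset.mem_univ _, ?_⟩
    rw [countMap_comp_perm]
    exact (Finset.mem_filter.mp hz).2
  · intro z hz
    refine Finset.mem_filter.mpr ⟨Finset.mem_univ _, ?_⟩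
    rw [countMap_comp_perm]
    exact (Finset.mem_filter.mp hz).2
  · intro z _; funext k; simp
  · intro z _; funext k; simp
  · intro z _; rfl

lemma muHy_comp_count (h : CVec X n → ℝ) (m : CVec X n) :
    MuHy (fun z => h (countMap n z)) m = h m := by
  unfold MuHy
  beta_reduce
  rw [Finset.sum_congr rfl (fun z hz => by rw [(Finset.mem_filter.mp hz).2]),
    Finset.sum_const, card_atom, nsmul_eq_mul]
  exact mul_div_cancel_left₀ _ (Nat.cast_ne_zero.mpr (nu_pos m).ne')

lemma muHy_const (c : ℝ) (m : CVec X n) : MuHy (fun _ => c) m = c :=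
  muHy_comp_count (fun _ => c) m

lemma inf_le_muHy (f : (Fin n → X) → ℝ) (m : CVec X n) :
    sInf (Set.range f) ≤ MuHy f m := by
  unfold MuHy
  have hnu : (0:ℝ) < (nu m : ℝ) := by exact_mod_cast nu_pos m
  rw [le_div_iff₀ hnu]
  have h := Finset.card_nsmul_le_sum (univ.filter fun z : Fin n → X => countMap n z = m) f
    (sInf (Set.range f)) (fun z _ => csInf_le (Set.finite_range f).bddBelow ⟨z, rfl⟩)
  rw [card_atom, nsmul_eq_mul] at h
  linarith

lemma muHy_eq_avg (f : (Fin n → X) → ℝ) (z : Fin n → X) :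
    MuHy f (countMap n z)
      = (1 / (Nat.factorial n : ℝ)) * ∑ π : Equiv.Perm (Fin n), f (fun k => z (π k)) := by
  have hspec := Nat.multinomial_spec Finset.univ (countMap n z).1
  rw [(countMap n z).2] at hspec
  have h1 : ((∏ x, Nat.factorial ((countMap n z).1 x) : ℕ) : ℝ) ≠ 0 := by
    have : (0:ℕ) < ∏ x, Nat.factorial ((countMap n z).1 x) :=
      Finset.prod_pos fun x _ => Nat.factorial_pos _
    exact_mod_cast this.ne'
  have h2 : ((nu (countMap n z) : ℕ) : ℝ) ≠ 0 := by
    exact_mod_cast (nu_pos (countMap n z)).ne'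
  have h3 : ((∏ x, Nat.factorial ((countMap n z).1 x) : ℕ) : ℝ) * (nu (countMap n z) : ℝ)
      = (Nat.factorial n : ℝ) := by exact_mod_cast hspec
  rw [sum_perm z f, nsmul_eq_mul]
  unfold MuHy
  rw [← h3]
  field_simp

end MuHyL
section Split
variable {X : Type*} [Fintype X] [DecidableEq X] {n k : ℕ}

/-- gluing map -/
def glue (z₁ : Fin n → X) (z₂ : Fin k → X) : Fin (n + k) → X :=
  fun i => Sum.elim z₁ z₂ (finSumFinEquiv.symm i)

lemma cylExt_glue (f : (Fin n → X) → ℝ) (z₁ : Fin n → X) (z₂ : Fin k → X) :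
    cylExt f (glue z₁ z₂) = f z₁ := by
  unfold cylExt glue
  congr 1
  funext i
  have hc : Fin.castLE (Nat.le_add_right n k) i = Fin.castAdd k i := rfl
  rw [hc, finSumFinEquiv_symm_apply_castAdd]
  rfl

lemma countMap_glue (z₁ : Fin n → X) (z₂ : Fin k → X) (x : X) :
    (countMap (n + k) (glue z₁ z₂)).1 x = (countMap n z₁).1 x + (countMap k z₂).1 x := by
  rw [← card_subtype_fiber, ← card_subtype_fiber, ← card_subtype_fiber]
  have e1 : {i // glue z₁ z₂ i = x} ≃ ({a : Fin n // z₁ a = x} ⊕ {b : Fin k // z₂ b = x}) := by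
    refine (finSumFinEquiv.symm.subtypeEquiv (q := fun s => Sum.elim z₁ z₂ s = x)
      (fun i => Iff.rfl)).trans ((Equiv.subtypeSum).trans (Equiv.sumCongr
        (Equiv.subtypeEquivRight (fun a => Iff.rfl))
        (Equiv.subtypeEquivRight (fun b => Iff.rfl))))
  rw [Fintype.card_congr e1, Fintype.card_sum]

/-- the gluing equivalence -/
def glueEquiv : (Fin n → X) × (Fin k → X) ≃ (Fin (n + k) → X) :=
  ((Equiv.sumArrowEquivProdArrow (Fin n) (Fin k) X).symm).trans
    (Equiv.arrowCongr finSumFinEquiv (Equiv.refl X))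

lemma glueEquiv_apply (p : (Fin n → X) × (Fin k → X)) : glueEquiv p = glue p.1 p.2 := by
  funext i
  rfl

lemma sum_atom_cylExt (f : (Fin n → X) → ℝ) (μ : CVec X (n + k)) :
    ∑ z ∈ univ.filter (fun z : Fin (n + k) → X => countMap (n + k) z = μ), cylExt f z
      = ∑ z₁ : Fin n → X, (nuSub μ (countMap n z₁) : ℝ) * f z₁ := by
  classical
  rw [Finset.sum_filter]
  rw [← Fintype.sum_equiv (glueEquiv (X := X) (n := n) (k := k))
    (fun p => if countMap (n + k) (glue p.1 p.2) = μ then f p.1 else 0)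
    (fun z => if countMap (n + k) z = μ then cylExt f z else 0)
    (fun p => by rw [glueEquiv_apply]; by_cases h : countMap (n+k) (glue p.1 p.2) = μ <;>
      simp [h, cylExt_glue])]
  rw [Fintype.sum_prod_type]
  refine Finset.sum_congr rfl fun z₁ _ => ?_
  by_cases hle : ∀ x, (countMap n z₁).1 x ≤ μ.1 x
  · have hsum : ∑ x, (μ.1 x - (countMap n z₁).1 x) = k := by
      have h1 : ∑ x, ((μ.1 x - (countMap n z₁).1 x) + (countMap n z₁).1 x) = ∑ x, μ.1 x :=
        Finset.sum_congr rfl fun x _ => Nat.sub_add_cancel (hle x)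
      rw [Finset.sum_add_distrib] at h1
      have h2 := μ.2
      have h3 := (countMap n z₁).2
      omega
    set m' : CVec X k := ⟨fun x => μ.1 x - (countMap n z₁).1 x, hsum⟩ with hm'
    have hcond : ∀ z₂ : Fin k → X,
        (countMap (n + k) (glue z₁ z₂) = μ) ↔ countMap k z₂ = m' := by
      intro z₂
      constructor
      · intro h
        apply Subtype.ext; funext x
        have := congrFun (congrArg Subtype.val h) x
        rw [countMap_glue] at this
        simp only [hm']
        omega
      · intro h
        apply Subtype.ext; funext x
        rw [countMap_glue, h]
        simp only [hm']
        have := hle x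
        omega
    calc ∑ z₂ : Fin k → X, (if countMap (n + k) (glue z₁ z₂) = μ then f z₁ else 0)
        = ∑ z₂ : Fin k → X, (if countMap k z₂ = m' then f z₁ else 0) :=
          Finset.sum_congr rfl fun z₂ _ => by rw [if_congr (hcond z₂) rfl rfl]
      _ = ∑ z₂ ∈ univ.filter (fun z₂ : Fin k → X => countMap k z₂ = m'), f z₁ :=
          (Finset.sum_filter _ _).symm
      _ = ((univ.filter (fun z₂ : Fin k → X => countMap k z₂ = m')).card : ℝ) * f z₁ := by
          rw [Finset.sum_const, nsmul_eq_mul]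
      _ = (nuSub μ (countMap n z₁) : ℝ) * f z₁ := by
          rw [card_atom, nuSub, if_pos hle]
          rfl
  · have hcond : ∀ z₂ : Fin k → X, ¬ (countMap (n + k) (glue z₁ z₂) = μ) := by
      intro z₂ h
      refine hle fun x => ?_
      have := congrFun (congrArg Subtype.val h) x
      rw [countMap_glue] at this
      omega
    rw [nuSub, if_neg hle]
    simp [hcond]

lemma muHy_cylExt (f : (Fin n → X) → ℝ) (μ : CVec X (n + k)) :
    MuHy (cylExt f) μ = gbar (fun m => MuHy f m) μ := by
  unfold MuHy gbar
  rw [sum_atom_cylExt f μ]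
  rw [← Finset.sum_fiberwise_of_maps_to (g := countMap n) (t := univ)
    (fun z _ => Finset.mem_univ _) (fun z₁ => (nuSub μ (countMap n z₁) : ℝ) * f z₁)]
  rw [Finset.sum_div]
  refine Finset.sum_congr rfl fun m _ => ?_
  have hinner : ∑ z₁ ∈ univ.filter (fun z₁ : Fin n → X => countMap n z₁ = m),
      (nuSub μ (countMap n z₁) : ℝ) * f z₁
      = (nuSub μ m : ℝ) * ∑ z₁ ∈ univ.filter (fun z₁ : Fin n → X => countMap n z₁ = m), f z₁ := by
    rw [Finset.mul_sum]
    exact Finset.sum_congr rfl fun z₁ hz₁ => by rw [(Finset.mem_filter.mp hz₁).2]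
  rw [hinner]
  have hm : ((nu m : ℕ) : ℝ) ≠ 0 := Nat.cast_ne_zero.mpr (nu_pos m).ne'
  show _ = _ * MuHy f m
  unfold MuHy
  have key : ∀ (a c S b : ℝ), b ≠ 0 → b * a / c * (S / b) = a * S / c := by
    intro a c S b hb
    rcases eq_or_ne c 0 with rfl | hc
    · simp
    · field_simp
  exact (key _ _ _ _ hm).symm

lemma gbar_congr {g₁ g₂ : CVec X n → ℝ} (h : ∀ m, g₁ m = g₂ m) (μ : CVec X (n + k)) :
    gbar g₁ μ = gbar g₂ μ :=
  Finset.sum_congr rfl fun m _ => by rw [h m]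

lemma gbar_const (c : ℝ) (μ : CVec X (n + k)) : gbar (fun _ => c) μ = c := by
  have h1 := muHy_cylExt (k := k) (fun _ : Fin n → X => c) μ
  have h2 : cylExt (k := k) (fun _ : Fin n → X => c) = fun _ => c := rfl
  rw [h2, muHy_const] at h1
  exact (gbar_congr (fun m => (muHy_const c m).symm) μ).trans h1.symm

lemma gbar_smul (l : ℝ) (g : CVec X n → ℝ) (μ : CVec X (n + k)) :
    gbar (fun m => l * g m) μ = l * gbar g μ := by
  unfold gbar
  rw [Finset.mul_sum]
  exact Finset.sum_congr rfl fun m _ => by ring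

lemma gbar_add (g₁ g₂ : CVec X n → ℝ) (μ : CVec X (n + k)) :
    gbar (fun m => g₁ m + g₂ m) μ = gbar g₁ μ + gbar g₂ μ := by
  unfold gbar
  rw [← Finset.sum_add_distrib]
  exact Finset.sum_congr rfl fun m _ => by ring

end Split
section Sym
variable {X : Type*} [Fintype X] [DecidableEq X] [Nonempty X] {N : ℕ}

lemma ef_sub_eq (f : (Fin N → X) → ℝ) :
    (fun z => MuHy f (countMap N z) - f z)
      = fun z => ∑ π : Equiv.Perm (Fin N),
          (1 / (Nat.factorial N : ℝ)) * (f (fun k => z (π k)) - f z) := by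
  funext z
  have hN : ((Nat.factorial N : ℕ) : ℝ) ≠ 0 := by exact_mod_cast (Nat.factorial_pos N).ne'
  rw [muHy_eq_avg f z]
  simp only [mul_sub]
  rw [Finset.sum_sub_distrib, ← Finset.mul_sum, Finset.sum_const, Finset.card_univ,
    Fintype.card_perm, Fintype.card_fin, nsmul_eq_mul]
  congr 1
  field_simp

lemma sym_le₁ {P' : ((Fin N → X) → ℝ) → ℝ} (hc : LowerPrevCoherent P') (hx : Exchangeable P')
    (f : (Fin N → X) → ℝ) : P' f ≤ P' (fun z => MuHy f (countMap N z)) := by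
  have h0 : 0 ≤ P' (fun z => MuHy f (countMap N z) - f z) := by
    rw [ef_sub_eq f]
    refine le_trans ?_ (coh_sum hc Finset.univ
      (fun π : Equiv.Perm (Fin N) => fun z =>
        (1 / (Nat.factorial N : ℝ)) * (f (fun k => z (π k)) - f z)))
    refine Finset.sum_nonneg fun π _ => ?_
    rw [hc.2.1 _ _ (by positivity)]
    exact mul_nonneg (by positivity) (hx f π)
  have h2 := hc.2.2 f (fun z => MuHy f (countMap N z) - f z)
  have h3 : (f + fun z => MuHy f (countMap N z) - f z) = fun z => MuHy f (countMap N z) := by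
    funext z; simp [Pi.add_apply]
  rw [h3] at h2
  linarith

lemma sym_le₂ {P' : ((Fin N → X) → ℝ) → ℝ} (hc : LowerPrevCoherent P') (hx : Exchangeable P')
    (f : (Fin N → X) → ℝ) : P' (fun z => MuHy f (countMap N z)) ≤ P' f := by
  have h0 : 0 ≤ P' (fun z => f z - MuHy f (countMap N z)) := by
    have heq : (fun z => f z - MuHy f (countMap N z))
        = fun z => ∑ π : Equiv.Perm (Fin N),
            (1 / (Nat.factorial N : ℝ)) * (f z - f (fun k => z (π k))) := by
      funext z
      have h1 : f z - MuHy f (countMap N z) = -(MuHy f (countMap N z) - f z) := by ring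
      rw [h1, congrFun (ef_sub_eq f) z, ← Finset.sum_neg_distrib]
      exact Finset.sum_congr rfl fun π _ => by ring
    rw [heq]
    refine le_trans ?_ (coh_sum hc Finset.univ
      (fun π : Equiv.Perm (Fin N) => fun z =>
        (1 / (Nat.factorial N : ℝ)) * (f z - f (fun k => z (π k)))))
    refine Finset.sum_nonneg fun π _ => ?_
    rw [hc.2.1 _ _ (by positivity)]
    refine mul_nonneg (by positivity) ?_
    have h := hx (fun x => f (fun k => x (π k))) π⁻¹
    have he : (fun x => (fun x' : Fin N → X => f (fun k => x' (π k))) (fun k => x (π⁻¹ k))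
          - f (fun k => x (π k)))
        = fun x => f x - f (fun k => x (π k)) := by
      funext x
      simp
    rw [he] at h
    exact h
  have h2 := hc.2.2 (fun z => MuHy f (countMap N z)) (fun z => f z - MuHy f (countMap N z))
  have h3 : ((fun z => MuHy f (countMap N z)) + fun z => f z - MuHy f (countMap N z)) = f := by
    funext z; simp [Pi.add_apply]
  rw [h3] at h2
  linarith

end Sym
/-- when the extendability condition holds, the point-wise smallest coherent
exchangeable extension to `n+k` variables has count distribution
`E(h) = sup{Q^n(g) : ḡ ≤ h}`, i.e. it is `f ↦ E(MuHy^{n+k}(f|·))`. -/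
theorem stmt18 {X : Type*} [Fintype X] [DecidableEq X] [Nonempty X] {n k : ℕ} (hn : 1 ≤ n)
    (P : ((Fin n → X) → ℝ) → ℝ)
    (hP : LowerPrevCoherent P) (hex : Exchangeable P)
    (Q : (CVec X n → ℝ) → ℝ)
    (hQ : ∀ h : CVec X n → ℝ, Q h = P (fun z => h (countMap n z)))
    (hdom : ∀ g : CVec X n → ℝ, ∃ μ : CVec X (n + k), Q g ≤ gbar g μ)
    (E : (CVec X (n + k) → ℝ) → ℝ)
    (hE : ∀ h : CVec X (n + k) → ℝ,
      E h = sSup {r : ℝ | ∃ g : CVec X n → ℝ, (∀ μ : CVec X (n + k), gbar g μ ≤ h μ) ∧ r = Q g})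
    (F : ((Fin (n + k) → X) → ℝ) → ℝ)
    (hF : ∀ f : (Fin (n + k) → X) → ℝ, F f = E (fun μ => MuHy f μ)) :
    LowerPrevCoherent F ∧ Exchangeable F ∧
      (∀ h : CVec X (n + k) → ℝ, F (fun z => h (countMap (n + k) z)) = E h) ∧
      (∀ f : (Fin n → X) → ℝ, P f ≤ F (cylExt f)) ∧
      ∀ E' : ((Fin (n + k) → X) → ℝ) → ℝ, LowerPrevCoherent E' → Exchangeable E' →
        (∀ f : (Fin n → X) → ℝ, P f ≤ E' (cylExt f)) → ∀ f, F f ≤ E' f := by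
  classical
  set S : (CVec X (n + k) → ℝ) → Set ℝ :=
    fun h => {r : ℝ | ∃ g : CVec X n → ℝ, (∀ μ : CVec X (n + k), gbar g μ ≤ h μ) ∧ r = Q g}
    with hSdef
  have hE' : ∀ h, E h = sSup (S h) := hE
  have hQ0 : Q (fun _ => (0:ℝ)) = 0 := by
    rw [hQ]
    have h := hP.2.1 (fun _ => (0:ℝ)) 0 le_rfl
    simpa using h
  have hQadd : ∀ g₁ g₂ : CVec X n → ℝ, Q g₁ + Q g₂ ≤ Q (fun m => g₁ m + g₂ m) := by
    intro g₁ g₂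
    rw [hQ, hQ, hQ]
    exact hP.2.2 _ _
  have hQsmul : ∀ (l : ℝ), 0 ≤ l → ∀ g : CVec X n → ℝ, Q (fun m => l * g m) = l * Q g := by
    intro l hl g
    rw [hQ, hQ]
    exact hP.2.1 _ l hl
  have hQconst : ∀ c : ℝ, c ≤ Q (fun _ => c) := by
    intro c
    rw [hQ]
    exact coh_const_le hP c
  have hneS : ∀ h, (S h).Nonempty := by
    intro h
    exact ⟨Q (fun _ => Finset.univ.inf' Finset.univ_nonempty h),
      fun _ => Finset.univ.inf' Finset.univ_nonempty h,
      fun μ => by rw [gbar_const]; exact Finset.inf'_le h (Finset.mem_univ μ), rfl⟩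
  have hbddS : ∀ h, BddAbove (S h) := by
    intro h
    refine ⟨Finset.univ.sup' Finset.univ_nonempty h, ?_⟩
    rintro r ⟨g, hg, rfl⟩
    obtain ⟨μ, hμ⟩ := hdom g
    exact le_trans hμ (le_trans (hg μ) (Finset.le_sup' h (Finset.mem_univ μ)))
  have hlowE : ∀ (h : CVec X (n + k) → ℝ) (b : ℝ), (∀ μ, b ≤ h μ) → b ≤ E h := by
    intro h b hb
    rw [hE']
    refine le_trans (hQconst b) (le_csSup (hbddS h) ?_)
    exact ⟨fun _ => b, fun μ => by rw [gbar_const]; exact hb μ, rfl⟩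
  have hEadd : ∀ h₁ h₂ : CVec X (n + k) → ℝ, E h₁ + E h₂ ≤ E (fun μ => h₁ μ + h₂ μ) := by
    intro h₁ h₂
    rw [hE' h₁, hE' h₂, hE']
    have step : ∀ r₁ ∈ S h₁, ∀ r₂ ∈ S h₂, r₁ + r₂ ≤ sSup (S (fun μ => h₁ μ + h₂ μ)) := by
      rintro r₁ ⟨g₁, hg₁, rfl⟩ r₂ ⟨g₂, hg₂, rfl⟩
      refine le_trans (hQadd g₁ g₂) (le_csSup (hbddS _) ?_)
      exact ⟨fun m => g₁ m + g₂ m,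
        fun μ => by rw [gbar_add]; exact add_le_add (hg₁ μ) (hg₂ μ), rfl⟩
    have h2 : ∀ r₁ ∈ S h₁, sSup (S h₂) ≤ sSup (S (fun μ => h₁ μ + h₂ μ)) - r₁ := fun r₁ hr₁ =>
      csSup_le (hneS h₂) (fun r₂ hr₂ => by linarith [step r₁ hr₁ r₂ hr₂])
    have h1 : sSup (S h₁) ≤ sSup (S (fun μ => h₁ μ + h₂ μ)) - sSup (S h₂) :=
      csSup_le (hneS h₁) (fun r₁ hr₁ => by linarith [h2 r₁ hr₁])
    linarith
  have hEsmul : ∀ (l : ℝ), 0 ≤ l → ∀ h, E (fun μ => l * h μ) = l * E h := by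
    intro l hl h
    rcases eq_or_lt_of_le hl with rfl | hl
    · rw [hE']
      have hup : ∀ r ∈ S (fun μ => 0 * h μ), r ≤ 0 := by
        rintro r ⟨g, hg, rfl⟩
        obtain ⟨μ, hμ⟩ := hdom g
        have h3 : gbar g μ ≤ 0 := by simpa using hg μ
        linarith
      have h0mem : (0:ℝ) ∈ S (fun μ => 0 * h μ) :=
        ⟨fun _ => 0, fun μ => by simp [gbar_const], hQ0.symm⟩
      have hz : sSup (S (fun μ => 0 * h μ)) = 0 :=
        le_antisymm (csSup_le (hneS _) hup) (le_csSup (hbddS _) h0mem)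
      rw [hz, zero_mul]
    · rw [hE', hE']
      apply le_antisymm
      · refine csSup_le (hneS _) ?_
        rintro r ⟨g, hg, rfl⟩
        have hmem : Q (fun m => (1 / l) * g m) ∈ S h := by
          refine ⟨fun m => (1 / l) * g m, fun μ => ?_, rfl⟩
          rw [gbar_smul]
          have h1 : (1 / l) * gbar g μ ≤ (1 / l) * (l * h μ) :=
            mul_le_mul_of_nonneg_left (hg μ) (by positivity)
          have h2 : (1 / l) * (l * h μ) = h μ := by field_simp
          linarith
        have hQr : Q g = l * Q (fun m => (1 / l) * g m) := by
          rw [hQsmul (1 / l) (by positivity) g]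
          field_simp
        rw [hQr]
        exact mul_le_mul_of_nonneg_left (le_csSup (hbddS h) hmem) (le_of_lt hl)
      · rw [mul_comm, ← le_div_iff₀ hl]
        refine csSup_le (hneS h) ?_
        rintro r ⟨g, hg, rfl⟩
        have hmem : Q (fun m => l * g m) ∈ S (fun μ => l * h μ) :=
          ⟨fun m => l * g m, fun μ => by
            rw [gbar_smul]; exact mul_le_mul_of_nonneg_left (hg μ) hl.le, rfl⟩
        have hle := le_csSup (hbddS _) hmem
        rw [hQsmul l hl.le g] at hle
        rw [le_div_iff₀ hl, mul_comm]
        exact hle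
  refine ⟨⟨?_, ?_, ?_⟩, ?_, ?_, ?_, ?_⟩
  · -- lower bound axiom
    intro f
    rw [hF]
    exact hlowE _ _ (fun μ => inf_le_muHy f μ)
  · -- homogeneity
    intro f l hl
    rw [hF, hF,
      show (fun μ => MuHy (fun z => l * f z) μ) = fun μ : CVec X (n + k) => l * MuHy f μ from
        funext fun μ => muHy_smul l f μ]
    exact hEsmul l hl _
  · -- superadditivity
    intro f g
    rw [hF, hF, hF,
      show (fun μ => MuHy (f + g) μ) = fun μ : CVec X (n + k) => MuHy f μ + MuHy g μ from
        funext fun μ => muHy_add f g μ]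
    exact hEadd _ _
  · -- exchangeability
    intro f π
    rw [hF]
    have hzero : (fun μ : CVec X (n + k) => MuHy (fun x => f (fun k' => x (π k')) - f x) μ)
        = fun _ => (0:ℝ) := by
      funext μ
      rw [muHy_sub, muHy_perm, sub_self]
    rw [hzero, hE']
    exact le_csSup (hbddS _) ⟨fun _ => 0, fun μ => by rw [gbar_const], hQ0.symm⟩
  · -- count distribution
    intro h
    rw [hF]
    exact congrArg E (funext fun μ => muHy_comp_count h μ)
  · -- dominates the assessments
    intro f
    rw [hF]
    have hmem : Q (fun m => MuHy f m) ∈ S (fun μ => MuHy (cylExt f) μ) :=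
      ⟨fun m => MuHy f m, fun μ => le_of_eq (muHy_cylExt f μ).symm, rfl⟩
    have hQle : Q (fun m => MuHy f m) ≤ E (fun μ => MuHy (cylExt f) μ) := by
      rw [hE']
      exact le_csSup (hbddS _) hmem
    refine le_trans ?_ hQle
    rw [hQ]
    exact sym_le₁ hP hex f
  · -- minimality
    intro E' hc' hx' hd' f
    rw [hF, hE']
    refine csSup_le (hneS _) ?_
    rintro r ⟨g, hg, rfl⟩
    rw [hQ]
    have step1 : P (fun z => g (countMap n z)) ≤ E' (cylExt (fun z => g (countMap n z))) := hd' _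
    have step2 : E' (cylExt (fun z => g (countMap n z)))
        ≤ E' (fun z => MuHy (cylExt (fun z' => g (countMap n z'))) (countMap (n + k) z)) :=
      sym_le₁ hc' hx' _
    have key : ∀ μ : CVec X (n + k), MuHy (cylExt (fun z' => g (countMap n z'))) μ = gbar g μ := by
      intro μ
      rw [muHy_cylExt]
      exact gbar_congr (fun m => muHy_comp_count g m) μ
    have step3 : E' (fun z => MuHy (cylExt (fun z' => g (countMap n z'))) (countMap (n + k) z))
        ≤ E' (fun z => MuHy f (countMap (n + k) z)) := by
      apply coh_mono hc'
      intro z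
      rw [key]
      exact hg _
    have step4 : E' (fun z => MuHy f (countMap (n + k) z)) ≤ E' f := sym_le₂ hc' hx' f
    linarith
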